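/- Let k ∈ ℝ, h > 0, I_m ∈ ℂ, and let G : ℝ → ℂ be twice continuously differentiable on the interval [-h, h]. Define the sinusoidal current I(l) = I_m · sin(k·(h − |l|)). Then ∫_{-h}^{h} I(l) · (G''(l) + k²·G(l)) dl = k·I_m · (G(h) + G(-h) − 2·cos(k·h)·G(0)). -/

import Mathlib

open Set intervalIntegral

/-- Radiation integral of a sinusoidal dipole current against a twice
continuously differentiable kernel `G`:
`∫_{-h}^{h} I_m sin(k(h-|l|)) (G''(l) + k² G(l)) dl
  = k I_m (G(h) + G(-h) - 2 cos(kh) G(0))`. -/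
theorem stmt_10 (k h : ℝ) (hh : 0 < h) (Im : ℂ) (G G' G'' : ℝ → ℂ)
    (hG : ∀ x ∈ Set.Icc (-h) h, HasDerivWithinAt G (G' x) (Set.Icc (-h) h) x)
    (hG' : ∀ x ∈ Set.Icc (-h) h, HasDerivWithinAt G' (G'' x) (Set.Icc (-h) h) x)
    (hG'' : ContinuousOn G'' (Set.Icc (-h) h)) :
    ∫ l in (-h)..h, (Im * (Real.sin (k * (h - |l|)) : ℂ)) * (G'' l + (k:ℂ)^2 * G l) =
      (k:ℂ) * Im * (G h + G (-h) - 2 * (Real.cos (k * h) : ℂ) * G 0) := by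
  have h0 : (0:ℝ) ≤ h := hh.le
  have hIcc1 : Set.Icc (0:ℝ) h ⊆ Set.Icc (-h) h := Set.Icc_subset_Icc (by linarith) le_rfl
  have hIcc2 : Set.Icc (-h) (0:ℝ) ⊆ Set.Icc (-h) h := Set.Icc_subset_Icc le_rfl h0
  have hGc : ContinuousOn G (Set.Icc (-h) h) := fun x hx => (hG x hx).continuousWithinAt
  have hG'c : ContinuousOn G' (Set.Icc (-h) h) := fun x hx => (hG' x hx).continuousWithinAt
  have hGd : ∀ x ∈ Set.Ioo (-h) h, HasDerivAt G (G' x) x := fun x hx =>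
    (hG x (Set.Ioo_subset_Icc_self hx)).hasDerivAt (Icc_mem_nhds hx.1 hx.2)
  have hG'd : ∀ x ∈ Set.Ioo (-h) h, HasDerivAt G' (G'' x) x := fun x hx =>
    (hG' x (Set.Ioo_subset_Icc_self hx)).hasDerivAt (Icc_mem_nhds hx.1 hx.2)
  set f : ℝ → ℂ := fun l => (Im * (Real.sin (k * (h - |l|)) : ℂ)) * (G'' l + (k:ℂ)^2 * G l)
    with hf
  have hfc : ContinuousOn f (Set.Icc (-h) h) :=
    ((continuous_const.mul (Complex.continuous_ofReal.comp
      (Real.continuous_sin.comp (continuous_const.mul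
      (continuous_const.sub continuous_abs))))).continuousOn).mul
      (hG''.add (continuousOn_const.mul hGc))
  have hint1 : IntervalIntegrable f MeasureTheory.volume 0 h :=
    (hfc.mono (by rw [Set.uIcc_of_le h0]; exact hIcc1)).intervalIntegrable
  have hint2 : IntervalIntegrable f MeasureTheory.volume (-h) 0 :=
    (hfc.mono (by rw [Set.uIcc_of_le (by linarith : (-h:ℝ) ≤ 0)]; exact hIcc2)).intervalIntegrable
  -- Right half
  have hR : ∫ l in (0:ℝ)..h, f l
      = (k:ℂ) * Im * G h
        - (Im * (Real.sin (k*h):ℂ) * G' 0 + (k:ℂ) * Im * (Real.cos (k*h):ℂ) * G 0) := by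
    have hcongr : ∫ l in (0:ℝ)..h, f l
        = ∫ l in (0:ℝ)..h, (Im * (Real.sin (k * (h - l)) : ℂ)) * (G'' l + (k:ℂ)^2 * G l) := by
      apply intervalIntegral.integral_congr
      intro l hl
      rw [Set.uIcc_of_le h0] at hl
      simp only [hf, abs_of_nonneg hl.1]
    rw [hcongr]
    set F : ℝ → ℂ := fun x =>
      Im * (Real.sin (k*(h-x)):ℂ) * G' x + (k:ℂ) * Im * (Real.cos (k*(h-x)):ℂ) * G x with hF
    have hlin : ∀ x : ℝ, HasDerivAt (fun x : ℝ => k * (h - x)) (-k) x := by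
      intro x
      simpa using ((hasDerivAt_const x h).sub (hasDerivAt_id x)).const_mul k
    have key : (∫ l in (0:ℝ)..h,
        (Im * (Real.sin (k * (h - l)) : ℂ)) * (G'' l + (k:ℂ)^2 * G l)) = F h - F 0 := by
      apply intervalIntegral.integral_eq_sub_of_hasDeriv_right_of_le h0
      · apply ContinuousOn.add
        · exact ((continuous_const.mul (Complex.continuous_ofReal.comp
            (Real.continuous_sin.comp (continuous_const.mul
            (continuous_const.sub continuous_id))))).continuousOn).mul (hG'c.mono hIcc1)
        · exact ((continuous_const.mul (Complex.continuous_ofReal.comp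
            (Real.continuous_cos.comp (continuous_const.mul
            (continuous_const.sub continuous_id))))).continuousOn).mul (hGc.mono hIcc1)
      · intro x hx
        have hx' : x ∈ Set.Ioo (-h) h := ⟨by linarith [hx.1], hx.2⟩
        have hs : HasDerivAt (fun x => (Real.sin (k*(h-x)) : ℂ))
            ((Real.cos (k*(h-x)) * (-k) : ℝ) : ℂ) x := ((hlin x).sin).ofReal_comp
        have hc : HasDerivAt (fun x => (Real.cos (k*(h-x)) : ℂ))
            ((-Real.sin (k*(h-x)) * (-k) : ℝ) : ℂ) x := ((hlin x).cos).ofReal_comp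
        have hd := ((hs.const_mul Im).mul (hG'd x hx')).add
          ((hc.const_mul ((k:ℂ) * Im)).mul (hGd x hx'))
        refine HasDerivAt.hasDerivWithinAt ?_
        convert hd using 1
        · rfl
        · push_cast
          ring
      · exact ((((continuous_const.mul (Complex.continuous_ofReal.comp
          (Real.continuous_sin.comp (continuous_const.mul
          (continuous_const.sub continuous_id))))).continuousOn).mul
          ((hG''.add (continuousOn_const.mul hGc)).mono hIcc1)).mono
          (by rw [Set.uIcc_of_le h0])).intervalIntegrable
    rw [key]
    simp only [hF, sub_self, mul_zero, Real.sin_zero, Real.cos_zero, sub_zero,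
      Complex.ofReal_zero, Complex.ofReal_one]
    ring
  -- Left half
  have hL : ∫ l in (-h:ℝ)..0, f l
      = (Im * (Real.sin (k*h):ℂ) * G' 0 - (k:ℂ) * Im * (Real.cos (k*h):ℂ) * G 0)
        + (k:ℂ) * Im * G (-h) := by
    have hcongr : ∫ l in (-h:ℝ)..0, f l
        = ∫ l in (-h:ℝ)..0, (Im * (Real.sin (k * (h + l)) : ℂ)) * (G'' l + (k:ℂ)^2 * G l) := by
      apply intervalIntegral.integral_congr
      intro l hl
      rw [Set.uIcc_of_le (by linarith : (-h:ℝ) ≤ 0)] at hl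
      simp only [hf, abs_of_nonpos hl.2, sub_neg_eq_add]
    rw [hcongr]
    set F : ℝ → ℂ := fun x =>
      Im * (Real.sin (k*(h+x)):ℂ) * G' x - (k:ℂ) * Im * (Real.cos (k*(h+x)):ℂ) * G x with hF
    have hlin : ∀ x : ℝ, HasDerivAt (fun x : ℝ => k * (h + x)) k x := by
      intro x
      simpa using ((hasDerivAt_const x h).add (hasDerivAt_id x)).const_mul k
    have key : (∫ l in (-h:ℝ)..0,
        (Im * (Real.sin (k * (h + l)) : ℂ)) * (G'' l + (k:ℂ)^2 * G l)) = F 0 - F (-h) := by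
      apply intervalIntegral.integral_eq_sub_of_hasDeriv_right_of_le (by linarith : (-h:ℝ) ≤ 0)
      · apply ContinuousOn.sub
        · exact ((continuous_const.mul (Complex.continuous_ofReal.comp
            (Real.continuous_sin.comp (continuous_const.mul
            (continuous_const.add continuous_id))))).continuousOn).mul (hG'c.mono hIcc2)
        · exact ((continuous_const.mul (Complex.continuous_ofReal.comp
            (Real.continuous_cos.comp (continuous_const.mul
            (continuous_const.add continuous_id))))).continuousOn).mul (hGc.mono hIcc2)
      · intro x hx
        have hx' : x ∈ Set.Ioo (-h) h := ⟨hx.1, by linarith [hx.2]⟩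
        have hs : HasDerivAt (fun x => (Real.sin (k*(h+x)) : ℂ))
            ((Real.cos (k*(h+x)) * k : ℝ) : ℂ) x := ((hlin x).sin).ofReal_comp
        have hc : HasDerivAt (fun x => (Real.cos (k*(h+x)) : ℂ))
            ((-Real.sin (k*(h+x)) * k : ℝ) : ℂ) x := ((hlin x).cos).ofReal_comp
        have hd := ((hs.const_mul Im).mul (hG'd x hx')).sub
          ((hc.const_mul ((k:ℂ) * Im)).mul (hGd x hx'))
        refine HasDerivAt.hasDerivWithinAt ?_
        convert hd using 1
        · rfl
        · push_cast
          ring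
      · exact ((((continuous_const.mul (Complex.continuous_ofReal.comp
          (Real.continuous_sin.comp (continuous_const.mul
          (continuous_const.add continuous_id))))).continuousOn).mul
          ((hG''.add (continuousOn_const.mul hGc)).mono hIcc2)).mono
          (by rw [Set.uIcc_of_le (by linarith : (-h:ℝ) ≤ 0)])).intervalIntegrable
    rw [key]
    simp only [hF, add_zero, add_neg_cancel, mul_zero, Real.sin_zero, Real.cos_zero,
      Complex.ofReal_zero, Complex.ofReal_one]
    ring
  calc ∫ l in (-h:ℝ)..h, f l
      = (∫ l in (-h:ℝ)..0, f l) + ∫ l in (0:ℝ)..h, f l :=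
        (intervalIntegral.integral_add_adjacent_intervals hint2 hint1).symm
    _ = _ := by rw [hL, hR]; ring
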